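/- arXiv:2210.04300 — 4 statements merged into one kernel-verified Lean document; each statement's English description precedes it below -/
import Mathlib

section
/- Let g, φ : ℝ^d → ℝ be Lipschitz with constants [g], [φ], and for each a in a set A let F(·,a) : ℝ^d → ℝ^d be Lipschitz with constant at most e^{c·Δt} (uniformly in a). For n ≤ N, a = (a_n,…,a_{N-1}) ∈ A^{N-n}, define trajectories X_{n,x} = x, X_{k+1,x} = F(X_{k,x}, a_k), and the cost J_n(x,a) = max_{n ≤ k ≤ N-1} g(X_{k,x}) ∨ (g ∨ φ)(X_{N,x}). Then J_n(·,a) is Lipschitz with constant at most max([g],[φ])·e^{c·(N-n)·Δt}, and consequently V_n(x) := inf_{a ∈ A^{N-n}} J_n(x,a) is Lipschitz with the same bound. -/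
/-- Discrete controlled trajectory: `traj F a x 0 = x`, `traj F a x (k+1) = F (traj F a x k) (a k)`. -/
def traj {E A : Type*} (F : E → A → E) (a : ℕ → A) (x : E) : ℕ → E
  | 0 => x
  | k + 1 => F (traj F a x k) (a k)

/-- The cost `J_n(x,a) = max_{n ≤ k ≤ N-1} g(X_{k,x}) ∨ (g ∨ φ)(X_{N,x})`, written with
trajectory steps indexed by `0,…,m` where `m = N - n` (so `(g∨φ)(X_N)` is absorbed as
`g(X_m) ∨ φ(X_m)`). -/
noncomputable def costJ {E A : Type*} (F : E → A → E) (g φ : E → ℝ)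
    (m : ℕ) (x : E) (a : ℕ → A) : ℝ :=
  ((Finset.range (m + 1)).sup' (Finset.nonempty_range_iff.mpr (Nat.succ_ne_zero m))
    fun k => g (traj F a x k)) ⊔ φ (traj F a x m)

/-- If `g, φ` are Lipschitz with constants `Lg, Lφ` and each `F(·,a)` is Lipschitz with
constant at most `e^{cΔt}` uniformly in `a`, then `J_n(·,a)` is Lipschitz with constant
`max(Lg,Lφ)·e^{c(N-n)Δt}`, and so is the value `V_n = inf_a J_n(·,a)`. -/
theorem stmt_2 {d : ℕ} {A : Type*} [Nonempty A]
    (F : (Fin d → ℝ) → A → (Fin d → ℝ)) (g φ : (Fin d → ℝ) → ℝ)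
    (Lg Lφ c Δt : ℝ) (hc : 0 ≤ c) (hΔt : 0 < Δt)
    (hg : ∀ x y, |g x - g y| ≤ Lg * ‖x - y‖)
    (hφ : ∀ x y, |φ x - φ y| ≤ Lφ * ‖x - y‖)
    (hF : ∀ (a : A) (x y : Fin d → ℝ), ‖F x a - F y a‖ ≤ Real.exp (c * Δt) * ‖x - y‖)
    (N n : ℕ) (hn : n ≤ N) :
    (∀ (a : ℕ → A) (x y : Fin d → ℝ),
        |costJ F g φ (N - n) x a - costJ F g φ (N - n) y a|
          ≤ max Lg Lφ * Real.exp (c * (N - n : ℕ) * Δt) * ‖x - y‖) ∧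
    (∀ x y : Fin d → ℝ,
        |(⨅ a : ℕ → A, costJ F g φ (N - n) x a) - (⨅ a : ℕ → A, costJ F g φ (N - n) y a)|
          ≤ max Lg Lφ * Real.exp (c * (N - n : ℕ) * Δt) * ‖x - y‖) := by
  set m := N - n with hm
  -- trajectory Lipschitz bound
  have htraj : ∀ (a : ℕ → A) (x y : Fin d → ℝ) (k : ℕ),
      ‖traj F a x k - traj F a y k‖ ≤ Real.exp (c * Δt) ^ k * ‖x - y‖ := by
    intro a x y k
    induction k with
    | zero => simp [traj]
    | succ k ih =>
      calc ‖traj F a x (k + 1) - traj F a y (k + 1)‖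
          ≤ Real.exp (c * Δt) * ‖traj F a x k - traj F a y k‖ := hF _ _ _
        _ ≤ Real.exp (c * Δt) * (Real.exp (c * Δt) ^ k * ‖x - y‖) :=
            mul_le_mul_of_nonneg_left ih (Real.exp_pos _).le
        _ = Real.exp (c * Δt) ^ (k + 1) * ‖x - y‖ := by ring
  have hexp : Real.exp (c * Δt) ^ m = Real.exp (c * (m : ℕ) * Δt) := by
    rw [← Real.exp_nat_mul]; ring_nf
  have oneside : ∀ (a : ℕ → A) (x y : Fin d → ℝ),
      costJ F g φ m x a - costJ F g φ m y a
        ≤ max Lg Lφ * Real.exp (c * (m : ℕ) * Δt) * ‖x - y‖ := by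
    intro a x y
    by_cases hxy : x = y
    · subst hxy; simp [Real.exp_pos]
    have hnorm : 0 < ‖x - y‖ := by
      rw [norm_pos_iff]; exact sub_ne_zero.mpr hxy
    have hLg : 0 ≤ Lg := by nlinarith [hg x y, abs_nonneg (g x - g y)]
    have hLφ : 0 ≤ Lφ := by nlinarith [hφ x y, abs_nonneg (φ x - φ y)]
    have h1 : (1 : ℝ) ≤ Real.exp (c * Δt) := Real.one_le_exp (by positivity)
    set B := max Lg Lφ * Real.exp (c * (m : ℕ) * Δt) * ‖x - y‖ with hB
    have hbound : ∀ (ψ : (Fin d → ℝ) → ℝ) (Lψ : ℝ), 0 ≤ Lψ → Lψ ≤ max Lg Lφ →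
        (∀ u v, |ψ u - ψ v| ≤ Lψ * ‖u - v‖) →
        ∀ k ≤ m, ψ (traj F a x k) - ψ (traj F a y k) ≤ B := by
      intro ψ Lψ hLψ hLψ' hψ k hk
      have := (le_abs_self _).trans (hψ (traj F a x k) (traj F a y k))
      have h2 : ‖traj F a x k - traj F a y k‖ ≤ Real.exp (c * (m : ℕ) * Δt) * ‖x - y‖ := by
        refine (htraj a x y k).trans ?_
        rw [← hexp]
        exact mul_le_mul_of_nonneg_right (pow_le_pow_right₀ h1 hk) hnorm.le
      calc ψ (traj F a x k) - ψ (traj F a y k)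
          ≤ Lψ * ‖traj F a x k - traj F a y k‖ := this
        _ ≤ Lψ * (Real.exp (c * (m : ℕ) * Δt) * ‖x - y‖) :=
            mul_le_mul_of_nonneg_left h2 hLψ
        _ ≤ max Lg Lφ * (Real.exp (c * (m : ℕ) * Δt) * ‖x - y‖) := by
            refine mul_le_mul_of_nonneg_right hLψ' (by positivity)
        _ = B := by rw [hB]; ring
    rw [sub_le_iff_le_add]
    unfold costJ
    apply sup_le
    · apply Finset.sup'_le
      intro k hk
      have hk' : k ≤ m := Nat.lt_succ_iff.mp (Finset.mem_range.mp hk)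
      have := hbound g Lg hLg (le_max_left _ _) hg k hk'
      have hle : g (traj F a y k) ≤ costJ F g φ m y a :=
        le_trans (Finset.le_sup' (fun k => g (traj F a y k)) hk) le_sup_left
      unfold costJ at hle
      linarith
    · have := hbound φ Lφ hLφ (le_max_right _ _) hφ m le_rfl
      have hle : φ (traj F a y m) ≤ costJ F g φ m y a := le_sup_right
      unfold costJ at hle
      linarith
  have key : ∀ (a : ℕ → A) (x y : Fin d → ℝ),
      |costJ F g φ m x a - costJ F g φ m y a|
        ≤ max Lg Lφ * Real.exp (c * (m : ℕ) * Δt) * ‖x - y‖ := by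
    intro a x y
    rw [abs_sub_le_iff]
    refine ⟨oneside a x y, ?_⟩
    rw [norm_sub_rev x y]
    exact oneside a y x
  refine ⟨key, ?_⟩
  have hbdd : ∀ x : Fin d → ℝ, BddBelow (Set.range fun a : ℕ → A => costJ F g φ m x a) := by
    intro x
    refine ⟨g x, ?_⟩
    rintro _ ⟨a, rfl⟩
    have h0 : g (traj F a x 0) ≤ (Finset.range (m + 1)).sup'
        (Finset.nonempty_range_iff.mpr (Nat.succ_ne_zero m)) (fun k => g (traj F a x k)) :=
      Finset.le_sup' (fun k => g (traj F a x k)) (Finset.mem_range.mpr (Nat.succ_pos m))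
    exact le_trans h0 le_sup_left
  have inf_side : ∀ x y : Fin d → ℝ,
      (⨅ a : ℕ → A, costJ F g φ m x a) - (⨅ a : ℕ → A, costJ F g φ m y a)
        ≤ max Lg Lφ * Real.exp (c * (m : ℕ) * Δt) * ‖x - y‖ := by
    intro x y
    rw [sub_le_iff_le_add, add_comm]
    have : ∀ a : ℕ → A, (⨅ a : ℕ → A, costJ F g φ m x a)
        - max Lg Lφ * Real.exp (c * (m : ℕ) * Δt) * ‖x - y‖ ≤ costJ F g φ m y a := by
      intro a
      have h1 := ciInf_le (hbdd x) a
      have h2 := oneside a x y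
      linarith
    have := le_ciInf this
    linarith
  intro x y
  rw [abs_sub_le_iff]
  refine ⟨inf_side x y, ?_⟩
  rw [norm_sub_rev x y]
  exact inf_side y x
end

section
/- Under the same hypotheses, for all x, y ∈ ℝ^d and controls a₀, ā₀: the p-fold iterates satisfy |F_h(·,a₀)^(p)(x) - F_h(·,ā₀)^(p)(y)| ≤ e^{C₁Δt}·( |x - y| + C₂·Δt·|a₀ - ā₀| ), where C₁ = 2|c|₁[f]₁, C₂ = 2|c|₁[f]₂, and Δt = p·h. -/
/-- Stability of the `p`-fold iterated Runge–Kutta map with frozen controls: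
`|F_h(·,a₀)^(p)(x) - F_h(·,ā₀)^(p)(y)| ≤ e^{C₁Δt}(|x-y| + C₂Δt|a₀-ā₀|)` with
`C₁ = 2|c|₁[f]₁`, `C₂ = 2|c|₁[f]₂` and `Δt = p·h`. -/
theorem stmt_9 {d κ : ℕ}
    (Fh : (Fin d → ℝ) → (Fin κ → ℝ) → (Fin d → ℝ))
    (c1 L1 L2 h Δt : ℝ) (p : ℕ)
    (hc1 : 0 ≤ c1) (hL1 : 0 ≤ L1) (hL2 : 0 ≤ L2) (hh : 0 < h) (hΔt : Δt = p * h)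
    (hstep : ∀ (x y : Fin d → ℝ) (a₀ abar₀ : Fin κ → ℝ),
        ‖Fh x a₀ - Fh y abar₀‖
          ≤ Real.exp (2 * h * c1 * L1) * ‖x - y‖ + 2 * h * c1 * L2 * ‖a₀ - abar₀‖) :
    ∀ (x y : Fin d → ℝ) (a₀ abar₀ : Fin κ → ℝ),
      ‖(fun z => Fh z a₀)^[p] x - (fun z => Fh z abar₀)^[p] y‖
        ≤ Real.exp (2 * c1 * L1 * Δt) * (‖x - y‖ + 2 * c1 * L2 * Δt * ‖a₀ - abar₀‖) := by
  intro x y a₀ abar₀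
  subst hΔt
  set E := Real.exp (2 * h * c1 * L1) with hE
  have hE1 : 1 ≤ E := Real.one_le_exp (by positivity)
  set K := 2 * h * c1 * L2 * ‖a₀ - abar₀‖ with hK
  have hK0 : 0 ≤ K := by positivity
  have key : ∀ n : ℕ,
      ‖(fun z => Fh z a₀)^[n] x - (fun z => Fh z abar₀)^[n] y‖
        ≤ E ^ n * (‖x - y‖ + n * K) := by
    intro n
    induction n with
    | zero => simp
    | succ n ih =>
      rw [Function.iterate_succ_apply', Function.iterate_succ_apply']
      calc ‖Fh ((fun z => Fh z a₀)^[n] x) a₀ - Fh ((fun z => Fh z abar₀)^[n] y) abar₀‖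
          ≤ E * ‖(fun z => Fh z a₀)^[n] x - (fun z => Fh z abar₀)^[n] y‖ + K :=
            hstep _ _ _ _
        _ ≤ E * (E ^ n * (‖x - y‖ + n * K)) + K := by
            have hEpos : 0 < E := lt_of_lt_of_le one_pos hE1
            nlinarith [ih, hEpos]
        _ ≤ E ^ (n + 1) * (‖x - y‖ + (n + 1 : ℕ) * K) := by
            have hEn : 1 ≤ E ^ (n + 1) := one_le_pow₀ hE1
            have h1 : K ≤ E ^ (n + 1) * K := le_mul_of_one_le_left hK0 hEn
            push_cast
            rw [pow_succ] at h1 ⊢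
            nlinarith [h1]
  have := key p
  have hEp : E ^ p = Real.exp (2 * c1 * L1 * (p * h)) := by
    rw [hE, ← Real.exp_nat_mul]; ring_nf
  rw [hEp] at this
  calc ‖(fun z => Fh z a₀)^[p] x - (fun z => Fh z abar₀)^[p] y‖
      ≤ Real.exp (2 * c1 * L1 * (p * h)) * (‖x - y‖ + p * K) := this
    _ = Real.exp (2 * c1 * L1 * (↑p * h)) * (‖x - y‖ + 2 * c1 * L2 * (↑p * h) * ‖a₀ - abar₀‖) := by
        rw [hK]; ring
end

section
/- Let F_h be a Runge–Kutta scheme with h·‖B‖_∞·[f]₁ ≤ 1/2, and let C_f := max_{a∈A} |f(0,a)|. Then for all x ∈ ℝ^d and a ∈ A: |F_h(x,a)| ≤ |x| + 2h·|c|₁·max(C_f, [f]₁)·(|x| + 1). -/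
/-- Linear growth bound for a Runge–Kutta step:
`|F_h(x,a)| ≤ |x| + 2h|c|₁ max(C_f,[f]₁)(|x|+1)` under `h‖B‖_∞[f]₁ ≤ 1/2`. -/
theorem stmt_10 {d q κ : ℕ} (A : Set (Fin κ → ℝ))
    (B : Fin q → Fin q → ℝ) (c : Fin q → ℝ)
    (f : (Fin d → ℝ) → (Fin κ → ℝ) → (Fin d → ℝ)) (L1 Cf : ℝ)
    (hL1 : 0 ≤ L1)
    (hf : ∀ (x x' : Fin d → ℝ) (a : Fin κ → ℝ), ‖f x a - f x' a‖ ≤ L1 * ‖x - x'‖)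
    (hCf : ∀ a ∈ A, ‖f 0 a‖ ≤ Cf)
    (h nB : ℝ) (hh : 0 < h) (hnB : ∀ i, ∑ j, |B i j| ≤ nB)
    (hsmall : h * nB * L1 ≤ 1 / 2)
    (x : Fin d → ℝ) (a : Fin κ → ℝ) (ha : a ∈ A)
    (ys : Fin q → (Fin d → ℝ))
    (hys : ∀ i, ys i = x + h • ∑ j, B i j • f (ys j) a) :
    ‖x + h • ∑ i, c i • f (ys i) a‖
      ≤ ‖x‖ + 2 * h * (∑ i, |c i|) * max Cf L1 * (‖x‖ + 1) := by
  have hCf0 : 0 ≤ Cf := le_trans (norm_nonneg _) (hCf a ha)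
  rcases Nat.eq_zero_or_pos q with hq | hq
  · subst hq
    simp only [Finset.univ_eq_empty, Finset.sum_empty, smul_zero, add_zero, mul_zero, zero_mul]
    linarith [norm_nonneg x]
  have _inst : Nonempty (Fin q) := Fin.pos_iff_nonempty.mp hq
  have hne : (Finset.univ : Finset (Fin q)).Nonempty := Finset.univ_nonempty
  set S : ℝ := Finset.univ.sup' hne (fun i => ‖f (ys i) a‖) with hS
  have hS0 : 0 ≤ S := by
    obtain ⟨i⟩ := Fin.pos_iff_nonempty.mp hq
    exact le_trans (norm_nonneg _) (Finset.le_sup' (fun i => ‖f (ys i) a‖) (Finset.mem_univ i))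
  have hnB0 : 0 ≤ nB := by
    obtain ⟨i⟩ := Fin.pos_iff_nonempty.mp hq
    exact le_trans (Finset.sum_nonneg fun j _ => abs_nonneg _) (hnB i)
  have hM : ∀ i, ‖f (ys i) a‖ ≤ Cf + L1 * ‖ys i‖ := by
    intro i
    calc ‖f (ys i) a‖ = ‖(f (ys i) a - f 0 a) + f 0 a‖ := by ring_nf
      _ ≤ ‖f (ys i) a - f 0 a‖ + ‖f 0 a‖ := norm_add_le _ _
      _ ≤ L1 * ‖ys i - 0‖ + Cf := add_le_add (hf _ _ _) (hCf a ha)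
      _ = Cf + L1 * ‖ys i‖ := by rw [sub_zero]; ring
  have hy : ∀ i, ‖ys i‖ ≤ ‖x‖ + h * nB * S := by
    intro i
    rw [hys i]
    calc ‖x + h • ∑ j, B i j • f (ys j) a‖
        ≤ ‖x‖ + ‖h • ∑ j, B i j • f (ys j) a‖ := norm_add_le _ _
      _ ≤ ‖x‖ + h * ∑ j, |B i j| * ‖f (ys j) a‖ := by
          gcongr
          rw [norm_smul, Real.norm_eq_abs, abs_of_pos hh]
          gcongr
          calc ‖∑ j, B i j • f (ys j) a‖ ≤ ∑ j, ‖B i j • f (ys j) a‖ :=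
                norm_sum_le _ _
            _ = ∑ j, |B i j| * ‖f (ys j) a‖ := by
                simp [norm_smul, Real.norm_eq_abs]
      _ ≤ ‖x‖ + h * ∑ j, |B i j| * S := by
          gcongr with j
          exact Finset.le_sup' (fun j => ‖f (ys j) a‖) (Finset.mem_univ j)
      _ = ‖x‖ + h * ((∑ j, |B i j|) * S) := by rw [Finset.sum_mul]
      _ ≤ ‖x‖ + h * (nB * S) := by
          gcongr
          exact hnB i
      _ = ‖x‖ + h * nB * S := by ring
  have hSbound : S ≤ 2 * (Cf + L1 * ‖x‖) := by
    obtain ⟨i, -, hi⟩ := Finset.exists_mem_eq_sup' hne (fun i => ‖f (ys i) a‖)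
    have h1 : S ≤ Cf + L1 * (‖x‖ + h * nB * S) := by
      calc S = ‖f (ys i) a‖ := by rw [hS, hi]
        _ ≤ Cf + L1 * ‖ys i‖ := hM i
        _ ≤ Cf + L1 * (‖x‖ + h * nB * S) := by gcongr; exact hy i
    nlinarith [norm_nonneg x]
  have key : ‖∑ i, c i • f (ys i) a‖ ≤ (∑ i, |c i|) * (2 * (Cf + L1 * ‖x‖)) := by
    calc ‖∑ i, c i • f (ys i) a‖ ≤ ∑ i, ‖c i • f (ys i) a‖ := norm_sum_le _ _
      _ = ∑ i, |c i| * ‖f (ys i) a‖ := by simp [norm_smul, Real.norm_eq_abs]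
      _ ≤ ∑ i, |c i| * (2 * (Cf + L1 * ‖x‖)) := by
          gcongr with i
          exact le_trans (Finset.le_sup' (fun i => ‖f (ys i) a‖) (Finset.mem_univ i)) hSbound
      _ = (∑ i, |c i|) * (2 * (Cf + L1 * ‖x‖)) := by rw [Finset.sum_mul]
  have hc0 : 0 ≤ ∑ i, |c i| := Finset.sum_nonneg fun i _ => abs_nonneg _
  have hmax : Cf + L1 * ‖x‖ ≤ max Cf L1 * (‖x‖ + 1) := by
    have h1 : Cf ≤ max Cf L1 := le_max_left _ _
    have h2 : L1 ≤ max Cf L1 := le_max_right _ _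
    nlinarith [norm_nonneg x]
  calc ‖x + h • ∑ i, c i • f (ys i) a‖
      ≤ ‖x‖ + ‖h • ∑ i, c i • f (ys i) a‖ := norm_add_le _ _
    _ = ‖x‖ + h * ‖∑ i, c i • f (ys i) a‖ := by
        rw [norm_smul, Real.norm_eq_abs, abs_of_pos hh]
    _ ≤ ‖x‖ + h * ((∑ i, |c i|) * (2 * (Cf + L1 * ‖x‖))) := by gcongr
    _ ≤ ‖x‖ + h * ((∑ i, |c i|) * (2 * (max Cf L1 * (‖x‖ + 1)))) := by gcongr
    _ = ‖x‖ + 2 * h * (∑ i, |c i|) * max Cf L1 * (‖x‖ + 1) := by ring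
end

section
/- Let F_h be a Runge–Kutta scheme with h·‖B‖_∞·[f]₁ ≤ 1/2, and let a : ℝ^d → A be Lipschitz with constant [a]. Define F_h^a(x) := F_h(x, a(x)). Then the map x ↦ F_h^a(x) - x is Lipschitz with constant at most 2·|c|₁·([f]₁ + [f]₂·[a])·h. -/
/-- Near-identity estimate for an RK step with Lipschitz feedback:
`x ↦ F_h(x, a(x)) - x` is Lipschitz with constant `2|c|₁([f]₁ + [f]₂[a])h`. -/
theorem stmt_11 {d q κ : ℕ}
    (B : Fin q → Fin q → ℝ) (c : Fin q → ℝ)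
    (f : (Fin d → ℝ) → (Fin κ → ℝ) → (Fin d → ℝ)) (L1 L2 : ℝ)
    (hL1 : 0 ≤ L1) (hL2 : 0 ≤ L2)
    (hf : ∀ (x x' : Fin d → ℝ) (b b' : Fin κ → ℝ),
        ‖f x b - f x' b'‖ ≤ L1 * ‖x - x'‖ + L2 * ‖b - b'‖)
    (h nB : ℝ) (hh : 0 < h) (hnB : ∀ i, ∑ j, |B i j| ≤ nB)
    (hsmall : h * nB * L1 ≤ 1 / 2)
    (a : (Fin d → ℝ) → (Fin κ → ℝ)) (La : ℝ) (hLa : 0 ≤ La)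
    (ha : ∀ x y, ‖a x - a y‖ ≤ La * ‖x - y‖)
    (ys : (Fin d → ℝ) → (Fin κ → ℝ) → Fin q → (Fin d → ℝ))
    (hys : ∀ (x : Fin d → ℝ) (b : Fin κ → ℝ) (i : Fin q),
        ys x b i = x + h • ∑ j, B i j • f (ys x b j) b)
    (Fh : (Fin d → ℝ) → (Fin κ → ℝ) → (Fin d → ℝ))
    (hFh : ∀ (x : Fin d → ℝ) (b : Fin κ → ℝ),
        Fh x b = x + h • ∑ i, c i • f (ys x b i) b) :
    ∀ x y : Fin d → ℝ,
      ‖(Fh x (a x) - x) - (Fh y (a y) - y)‖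
        ≤ 2 * (∑ i, |c i|) * (L1 + L2 * La) * h * ‖x - y‖ := by
  intro x y
  rcases Nat.eq_zero_or_pos q with hq | hq
  · subst hq
    simp [hFh]
  · have hne : (Finset.univ : Finset (Fin q)).Nonempty :=
      ⟨⟨0, hq⟩, Finset.mem_univ _⟩
    set E := ‖x - y‖ with hE
    have hE0 : 0 ≤ E := norm_nonneg _
    set D : Fin q → ℝ := fun i => ‖ys x (a x) i - ys y (a y) i‖ with hD
    set M : ℝ := Finset.univ.sup' hne D with hM
    have hDM : ∀ i, D i ≤ M := fun i => Finset.le_sup' D (Finset.mem_univ i)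
    have hM0 : 0 ≤ M := le_trans (norm_nonneg _) (hDM ⟨0, hq⟩)
    have hnB0 : 0 ≤ nB :=
      le_trans (Finset.sum_nonneg fun j _ => abs_nonneg _) (hnB ⟨0, hq⟩)
    have haE : ‖a x - a y‖ ≤ La * E := ha x y
    set S : ℝ := L1 * M + L2 * (La * E) with hS
    have hS0 : 0 ≤ S :=
      add_nonneg (mul_nonneg hL1 hM0) (mul_nonneg hL2 (mul_nonneg hLa hE0))
    have hfd : ∀ i, ‖f (ys x (a x) i) (a x) - f (ys y (a y) i) (a y)‖ ≤ S := by
      intro i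
      calc ‖f (ys x (a x) i) (a x) - f (ys y (a y) i) (a y)‖
          ≤ L1 * D i + L2 * ‖a x - a y‖ := hf _ _ _ _
        _ ≤ L1 * M + L2 * (La * E) :=
            add_le_add (mul_le_mul_of_nonneg_left (hDM i) hL1)
              (mul_le_mul_of_nonneg_left haE hL2)
        _ = S := rfl
    have key : ∀ i, D i ≤ E + h * (nB * S) := by
      intro i
      have hdiff : ys x (a x) i - ys y (a y) i
          = (x - y) + h • ∑ j, B i j •
              (f (ys x (a x) j) (a x) - f (ys y (a y) j) (a y)) := by
        rw [hys x (a x) i, hys y (a y) i]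
        simp only [smul_sub, Finset.sum_sub_distrib]
        abel
      calc D i = ‖(x - y) + h • ∑ j, B i j •
              (f (ys x (a x) j) (a x) - f (ys y (a y) j) (a y))‖ := by
            rw [hD]; simp only; rw [hdiff]
        _ ≤ E + ‖h • ∑ j, B i j •
              (f (ys x (a x) j) (a x) - f (ys y (a y) j) (a y))‖ :=
            norm_add_le _ _
        _ = E + h * ‖∑ j, B i j •
              (f (ys x (a x) j) (a x) - f (ys y (a y) j) (a y))‖ := by
            rw [norm_smul, Real.norm_eq_abs, abs_of_pos hh]
        _ ≤ E + h * ∑ j, |B i j| *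
              ‖f (ys x (a x) j) (a x) - f (ys y (a y) j) (a y)‖ := by
            gcongr
            exact (norm_sum_le _ _).trans (le_of_eq (by
              simp [norm_smul, Real.norm_eq_abs]))
        _ ≤ E + h * ∑ j, |B i j| * S := by
            gcongr with j hj
            exact hfd j
        _ = E + h * ((∑ j, |B i j|) * S) := by rw [← Finset.sum_mul]
        _ ≤ E + h * (nB * S) := by
            gcongr
            exact hnB i
    have hMle : M ≤ E + h * (nB * S) := Finset.sup'_le hne D (fun i _ => key i)
    have hSb : S ≤ 2 * (L1 + L2 * La) * E := by
      have h1 := mul_le_mul_of_nonneg_left hMle hL1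
      have h2 := mul_le_mul_of_nonneg_right hsmall hS0
      nlinarith
    have hFdiff : (Fh x (a x) - x) - (Fh y (a y) - y)
        = h • ∑ i, c i • (f (ys x (a x) i) (a x) - f (ys y (a y) i) (a y)) := by
      rw [hFh, hFh]
      simp only [smul_sub, Finset.sum_sub_distrib]
      abel
    have hc0 : 0 ≤ ∑ i, |c i| := Finset.sum_nonneg fun i _ => abs_nonneg _
    calc ‖(Fh x (a x) - x) - (Fh y (a y) - y)‖
        = h * ‖∑ i, c i • (f (ys x (a x) i) (a x) - f (ys y (a y) i) (a y))‖ := by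
          rw [hFdiff, norm_smul, Real.norm_eq_abs, abs_of_pos hh]
      _ ≤ h * ∑ i, |c i| * ‖f (ys x (a x) i) (a x) - f (ys y (a y) i) (a y)‖ := by
          gcongr
          exact (norm_sum_le _ _).trans (le_of_eq (by
            simp [norm_smul, Real.norm_eq_abs]))
      _ ≤ h * ∑ i, |c i| * S := by
          gcongr with i hi
          exact hfd i
      _ = h * ((∑ i, |c i|) * S) := by rw [← Finset.sum_mul]
      _ ≤ 2 * (∑ i, |c i|) * (L1 + L2 * La) * h * E := by
          nlinarith [mul_le_mul_of_nonneg_left hSb hc0,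
            mul_le_mul_of_nonneg_left
              (mul_le_mul_of_nonneg_left hSb hc0) hh.le]
end
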